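/- Let K be a compact Hausdorff space and (r_s)_{s∈Γ} a retractional skeleton on K. If Γ' ⊆ Γ is a countable up-directed subset, then s := sup Γ' exists in Γ and for every x ∈ K, the net (r_t(x))_{t∈Γ'} converges to r_s(x). -/

import Mathlib

open Filter

theorem countable_updirected_has_sup_and_limit
    {K : Type*} [TopologicalSpace K] [CompactSpace K] [T2Space K]
    {Γ : Type*} [PartialOrder Γ] [Nonempty Γ]
    (hdir : ∀ s t : Γ, ∃ u, s ≤ u ∧ t ≤ u)
    (hσ : ∀ f : ℕ → Γ, Monotone f → ∃ s, IsLUB (Set.range f) s)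
    (r : Γ → K → K)
    (hcont : ∀ s, Continuous (r s))
    (hretr : ∀ s, ∀ x, r s (r s x) = r s x)
    (hmetr : ∀ s : Γ, TopologicalSpace.MetrizableSpace (Set.range (r s)))
    (hcomm : ∀ s t : Γ, s ≤ t → ∀ x, r s (r t x) = r s x ∧ r t (r s x) = r s x)
    (hseq : ∀ f : ℕ → Γ, Monotone f → ∀ s, IsLUB (Set.range f) s →
      ∀ x : K, Tendsto (fun n => r (f n) x) atTop (nhds (r s x)))
    (hlim : ∀ x : K, Tendsto (fun s : Γ => r s x) atTop (nhds x))
    (Γ' : Set Γ) (hΓ'c : Γ'.Countable)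
    (hΓ'dir : DirectedOn (· ≤ ·) Γ') (hΓ'ne : Γ'.Nonempty) :
    ∃ s : Γ, IsLUB Γ' s ∧
      ∀ x : K, Tendsto (fun t : Γ' => r t x) atTop (nhds (r s x)) := by
  classical
  -- enumerate Γ'
  obtain ⟨e, he⟩ := hΓ'c.exists_eq_range hΓ'ne
  have heΓ' : ∀ n, e n ∈ Γ' := fun n => he ▸ ⟨n, rfl⟩
  -- step function: given a ∈ Γ' and n, pick b ∈ Γ' with a ≤ b and e n ≤ b
  have hstep : ∀ (a : Γ) (_ : a ∈ Γ') (n : ℕ), ∃ b, b ∈ Γ' ∧ a ≤ b ∧ e n ≤ b := by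
    intro a ha n
    obtain ⟨b, hb, hab, heb⟩ := hΓ'dir a ha (e n) (heΓ' n)
    exact ⟨b, hb, hab, heb⟩
  -- build a monotone cofinal sequence f in Γ'
  have key : ∃ f : ℕ → Γ, (∀ n, f n ∈ Γ') ∧ Monotone f ∧ ∀ n, e n ≤ f n := by
    choose g hgΓ' hg1 hg2 using hstep
    refine ⟨fun n => Nat.rec (e 0) (fun n a => if h : a ∈ Γ' then g a h (n+1) else a) n,
      ?_, ?_, ?_⟩
    · intro n
      induction n with
      | zero => exact heΓ' 0
      | succ n ih => simpa [dif_pos ih] using hgΓ' _ ih (n+1)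
    · have hmem : ∀ n, (Nat.rec (e 0) (fun n a => if h : a ∈ Γ' then g a h (n+1) else a) n : Γ)
          ∈ Γ' := by
        intro n
        induction n with
        | zero => exact heΓ' 0
        | succ n ih => simpa [dif_pos ih] using hgΓ' _ ih (n+1)
      apply monotone_nat_of_le_succ
      intro n
      simp only [dif_pos (hmem n)]
      exact hg1 _ (hmem n) (n+1)
    · have hmem : ∀ n, (Nat.rec (e 0) (fun n a => if h : a ∈ Γ' then g a h (n+1) else a) n : Γ)
          ∈ Γ' := by
        intro n
        induction n with
        | zero => exact heΓ' 0
        | succ n ih => simpa [dif_pos ih] using hgΓ' _ ih (n+1)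
      intro n
      cases n with
      | zero => exact le_rfl
      | succ n => simpa [dif_pos (hmem n)] using hg2 _ (hmem n) (n+1)
  obtain ⟨f, hfΓ', hfmono, hfcof⟩ := key
  obtain ⟨s, hs⟩ := hσ f hfmono
  -- s is a LUB of Γ'
  have hsub : IsLUB Γ' s := by
    constructor
    · intro t ht
      rw [he] at ht
      obtain ⟨n, rfl⟩ := ht
      exact (hfcof n).trans (hs.1 ⟨n, rfl⟩)
    · intro b hb
      exact hs.2 (by rintro _ ⟨n, rfl⟩; exact hb (hfΓ' n))
  refine ⟨s, hsub, fun x => ?_⟩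
  -- instances on the subtype Γ'
  haveI : Nonempty Γ' := ⟨⟨e 0, heΓ' 0⟩⟩
  haveI : IsDirected Γ' (· ≤ ·) := by
    constructor
    rintro ⟨a, ha⟩ ⟨b, hb⟩
    obtain ⟨c, hc, hac, hbc⟩ := hΓ'dir a ha b hb
    exact ⟨⟨c, hc⟩, hac, hbc⟩
  -- the metric on the range of r s
  set M := Set.range (r s)
  haveI := hmetr s
  letI : MetricSpace M := TopologicalSpace.metrizableSpaceMetric M
  set y := r s x with hy
  have hrs_y : r s y = y := hretr s x
  -- for t ∈ Γ', r t x = r t y and r t x ∈ M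
  have hts : ∀ t ∈ Γ', t ≤ s := fun t ht => hsub.1 ht
  have hmemM : ∀ t ∈ Γ', r t x ∈ M := by
    intro t ht
    exact ⟨r t x, (hcomm t s (hts t ht) x).2⟩
  -- reduce to convergence in M
  have hyM : y ∈ M := ⟨x, rfl⟩
  set v : Γ' → M := fun t => ⟨r t x, hmemM t t.2⟩
  suffices hv : Tendsto v atTop (nhds (⟨y, hyM⟩ : M)) by
    have := (continuous_subtype_val.tendsto _).comp hv
    exact this
  rw [Metric.tendsto_nhds]
  intro ε hε
  by_contra hcon
  rw [Filter.not_eventually] at hcon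
  rw [frequently_atTop] at hcon
  -- hcon : ∀ a : Γ', ∃ b ≥ a, ¬ dist (v b) ⟨y,_⟩ < ε
  -- build a bad monotone cofinal sequence g : ℕ → Γ'
  have hbad : ∀ (a : Γ) (_ : a ∈ Γ') (n : ℕ),
      ∃ b, ∃ hb : b ∈ Γ', a ≤ b ∧ f n ≤ b ∧ ε ≤ dist (v ⟨b, hb⟩) (⟨y, hyM⟩ : M) := by
    intro a ha n
    obtain ⟨c, hc, hac, hfc⟩ := hΓ'dir a ha (f n) (hfΓ' n)
    obtain ⟨⟨b, hb⟩, hcb, hbbad⟩ := hcon ⟨c, hc⟩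
    exact ⟨b, hb, hac.trans hcb, hfc.trans hcb, not_lt.1 hbbad⟩
  choose g hgΓ' hg1 hg2 hg3 using hbad
  -- build the sequence
  set G : ℕ → Γ := fun n => Nat.rec (g (e 0) (heΓ' 0) 0)
    (fun n a => if h : a ∈ Γ' then g a h (n+1) else a) n with hG
  have hGmem : ∀ n, G n ∈ Γ' := by
    intro n
    induction n with
    | zero => exact hgΓ' _ (heΓ' 0) 0
    | succ n ih => simp only [hG]; simpa [dif_pos (show (Nat.rec (g (e 0) (heΓ' 0) 0) (fun n a => if h : a ∈ Γ' then g a h (n+1) else a) n : Γ) ∈ Γ' from ih)] using hgΓ' _ ih (n+1)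
  have hGmono : Monotone G := by
    apply monotone_nat_of_le_succ
    intro n
    have := hGmem n
    simp only [hG]
    simpa [dif_pos (show (Nat.rec (g (e 0) (heΓ' 0) 0) (fun n a => if h : a ∈ Γ' then g a h (n+1) else a) n : Γ) ∈ Γ' from this)] using hg1 _ this (n+1)
  have hGcof : ∀ n, f n ≤ G n := by
    intro n
    cases n with
    | zero => exact hg2 _ (heΓ' 0) 0
    | succ n => simpa [hG, dif_pos (show (Nat.rec (g (e 0) (heΓ' 0) 0) (fun n a => if h : a ∈ Γ' then g a h (n+1) else a) n : Γ) ∈ Γ' from hGmem n)] using hg2 _ (hGmem n) (n+1)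
  have hGbad : ∀ n, ε ≤ dist (v ⟨G n, hGmem n⟩) (⟨y, hyM⟩ : M) := by
    intro n
    cases n with
    | zero => exact hg3 _ (heΓ' 0) 0
    | succ n =>
      have h := hg3 _ (hGmem n) (n+1)
      convert h using 3
      simp [hG, dif_pos (show (Nat.rec (g (e 0) (heΓ' 0) 0) (fun n a => if h : a ∈ Γ' then g a h (n+1) else a) n : Γ) ∈ Γ' from hGmem n)]
  -- range G has LUB s
  have hGlub : IsLUB (Set.range G) s := by
    constructor
    · rintro _ ⟨n, rfl⟩
      exact hsub.1 (hGmem n)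
    · intro b hb
      apply hsub.2
      intro t ht
      rw [he] at ht
      obtain ⟨n, rfl⟩ := ht
      exact ((hfcof n).trans (hGcof n)).trans (hb ⟨n, rfl⟩)
  -- convergence of the sequence, contradiction
  have hconv := hseq G hGmono s hGlub x
  -- lift to M
  have hconvM : Tendsto (fun n => v ⟨G n, hGmem n⟩) atTop (nhds (⟨y, hyM⟩ : M)) := by
    rw [tendsto_subtype_rng]
    exact hconv
  rw [Metric.tendsto_nhds] at hconvM
  obtain ⟨n, hn⟩ := (hconvM ε hε).exists
  exact absurd (hGbad n) (not_le.2 hn)
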